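/- For every θ > 0, the number of leaves L_n^{(θ)} of a Hoppe tree with n nodes and parameter θ has variance Var(L_n^{(θ)}) = (θ + n − 1)/12 + O(1/n) as n → ∞; that is, n·(Var(L_n^{(θ)}) − (θ + n − 1)/12) is bounded in n. -/

import Mathlib

set_option linter.unusedSectionVars false


open MeasureTheory ProbabilityTheory Real Filter Topology

noncomputable section

/-- Depth of node `i` in the Hoppe tree grown from the parent choices `U`:
`U k ω` is the parent of node `k + 2` (a node in `{1, …, k + 1}`, almost surely);
node `1` is the root. The `min` clipping is irrelevant almost surely. -/
def hoppeDepth {Ω : Type*} (U : ℕ → Ω → ℕ) (ω : Ω) : ℕ → ℕ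
  | 0 => 0
  | 1 => 0
  | n + 2 => hoppeDepth U ω (min (U n ω) (n + 1)) + 1
  decreasing_by omega

/-- The parent choices of a Hoppe tree with parameter `θ`: `U k` is the (random) parent
of node `k + 2`, the choices being independent, node `k + 2` choosing its parent among
nodes `1, …, k + 1`, namely the root `1` with probability `θ / (θ + k)` and each other
node with probability `1 / (θ + k)`. -/
structure IsHoppeParents {Ω : Type*} [MeasurableSpace Ω] (θ : ℝ) (μ : Measure Ω)
    (U : ℕ → Ω → ℕ) : Prop where
  meas : ∀ k, Measurable (U k)
  indep : iIndepFun U μ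
  root : ∀ k : ℕ, μ {ω | U k ω = 1} = ENNReal.ofReal (θ / (θ + k))
  nonroot : ∀ k j : ℕ, 2 ≤ j → j ≤ k + 1 → μ {ω | U k ω = j} = ENNReal.ofReal (1 / (θ + k))
  range : ∀ k : ℕ, μ {ω | 1 ≤ U k ω ∧ U k ω ≤ k + 1} = 1

/-- Height of the Hoppe tree with `n` nodes: maximal depth over nodes `1, …, n`. -/
def hoppeHeight {Ω : Type*} (U : ℕ → Ω → ℕ) (ω : Ω) (n : ℕ) : ℕ :=
  (Finset.Icc 1 n).sup (fun i => hoppeDepth U ω i)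

/-- Internal path length of the Hoppe tree with `n` nodes: sum of the depths of
nodes `1, …, n`. -/
def hoppePathLength {Ω : Type*} (U : ℕ → Ω → ℕ) (ω : Ω) (n : ℕ) : ℕ :=
  ∑ i ∈ Finset.Icc 1 n, hoppeDepth U ω i

/-- Number of leaves of the Hoppe tree with `n` nodes: nodes `j ∈ {1, …, n}` that are
the parent of no node `k ∈ {2, …, n}`. -/
def hoppeLeafCount {Ω : Type*} (U : ℕ → Ω → ℕ) (ω : Ω) (n : ℕ) : ℕ :=
  ((Finset.Icc 1 n).filter (fun j => ∀ k ∈ Finset.Icc (2 : ℕ) n, U (k - 2) ω ≠ j)).card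

def leafEvent {Ω : Type*} (U : ℕ → Ω → ℕ) (n j : ℕ) : Set Ω :=
  {ω | ∀ k ∈ Finset.Icc 2 n, U (k - 2) ω ≠ j}

section
variable {Ω : Type*} [MeasurableSpace Ω] {θ : ℝ} {μ : Measure Ω} {U : ℕ → Ω → ℕ}

omit [MeasurableSpace Ω] in
lemma leafEvent_eq (U : ℕ → Ω → ℕ) (n j : ℕ) :
    leafEvent U n j = ⋂ i ∈ Finset.range (n - 1), (U i) ⁻¹' ({j}ᶜ) := by
  ext ω
  simp only [leafEvent, Set.mem_setOf_eq, Set.mem_iInter, Finset.mem_range, Finset.mem_Icc,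
    Set.mem_preimage, Set.mem_compl_iff, Set.mem_singleton_iff]
  constructor
  · intro h i hi
    have := h (i + 2) ⟨by omega, by omega⟩
    simpa using this
  · intro h k hk
    have := h (k - 2) (by omega)
    have hk2 : k - 2 + 2 = k := by omega
    simpa [hk2] using this

lemma measurableSet_leafEvent (hU : IsHoppeParents θ μ U) (n j : ℕ) :
    MeasurableSet (leafEvent U n j) := by
  rw [leafEvent_eq]
  exact MeasurableSet.biInter (Finset.countable_toSet _)
    (fun i _ => (hU.meas i) (by trivial))

lemma meas_leafEvent (hU : IsHoppeParents θ μ U) (n j : ℕ) :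
    μ (leafEvent U n j) = ∏ i ∈ Finset.range (n - 1), μ ((U i) ⁻¹' ({j}ᶜ)) := by
  rw [leafEvent_eq]
  exact hU.indep.meas_biInter (fun i _ => ⟨{j}ᶜ, trivial, rfl⟩)

lemma meas_leafEvent_pair (hU : IsHoppeParents θ μ U) (n a b : ℕ) :
    μ (leafEvent U n a ∩ leafEvent U n b)
      = ∏ i ∈ Finset.range (n - 1), μ ((U i) ⁻¹' ({a}ᶜ ∩ {b}ᶜ)) := by
  have h : leafEvent U n a ∩ leafEvent U n b
      = ⋂ i ∈ Finset.range (n - 1), (U i) ⁻¹' ({a}ᶜ ∩ {b}ᶜ) := by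
    rw [leafEvent_eq, leafEvent_eq]
    ext ω
    simp only [Set.mem_inter_iff, Set.mem_iInter, Set.mem_preimage, Set.mem_compl_iff,
      Set.mem_singleton_iff]
    exact ⟨fun h i hi => ⟨h.1 i hi, h.2 i hi⟩,
      fun h => ⟨fun i hi => (h i hi).1, fun i hi => (h i hi).2⟩⟩
  rw [h]
  exact hU.indep.meas_biInter (fun i _ => ⟨{a}ᶜ ∩ {b}ᶜ, trivial, rfl⟩)

end

section
variable {Ω : Type*} [MeasurableSpace Ω] {θ : ℝ} {μ : Measure Ω} [IsProbabilityMeasure μ]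
  {U : ℕ → Ω → ℕ}

lemma measurableSet_eq_set (hU : IsHoppeParents θ μ U) (i j : ℕ) :
    MeasurableSet {ω | U i ω = j} := by
  have : {ω | U i ω = j} = (U i) ⁻¹' {j} := by ext ω; simp
  rw [this]; exact hU.meas i (by trivial)

lemma meas_eq_out (hU : IsHoppeParents θ μ U) (i j : ℕ) (hj : j = 0 ∨ i + 2 ≤ j) :
    μ {ω | U i ω = j} = 0 := by
  have hS : MeasurableSet {ω | 1 ≤ U i ω ∧ U i ω ≤ i + 1} := by
    have h : {ω | 1 ≤ U i ω ∧ U i ω ≤ i + 1} = (U i) ⁻¹' (Set.Icc 1 (i+1)) := by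
      ext ω; simp [Set.mem_Icc]
    rw [h]; exact hU.meas i (by trivial)
  have hc : μ ({ω | 1 ≤ U i ω ∧ U i ω ≤ i + 1}ᶜ) = 0 := by
    rw [prob_compl_eq_one_sub hS, hU.range i, tsub_self]
  refine measure_mono_null ?_ hc
  intro ω hω
  simp only [Set.mem_setOf_eq, Set.mem_compl_iff] at hω ⊢
  omega

lemma factor_compl (hU : IsHoppeParents θ μ U) (i j : ℕ) :
    μ ((U i) ⁻¹' ({j}ᶜ)) = 1 - μ {ω | U i ω = j} := by
  have h : (U i) ⁻¹' ({j}ᶜ) = {ω | U i ω = j}ᶜ := by ext ω; simp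
  rw [h, prob_compl_eq_one_sub (measurableSet_eq_set hU i j)]

lemma factor_compl_big (hU : IsHoppeParents θ μ U) {i j : ℕ} (hj : i + 2 ≤ j) :
    μ ((U i) ⁻¹' ({j}ᶜ)) = 1 := by
  rw [factor_compl hU, meas_eq_out hU i j (Or.inr hj), tsub_zero]

lemma factor_compl_mid (hθ : 0 < θ) (hU : IsHoppeParents θ μ U) {i j : ℕ}
    (h2 : 2 ≤ j) (hji : j ≤ i + 1) :
    (μ ((U i) ⁻¹' ({j}ᶜ))).toReal = 1 - 1 / (θ + i) := by
  have hi1 : 1 ≤ i := by omega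
  have hpos : (0:ℝ) < θ + i := by
    have : (1:ℝ) ≤ (i:ℝ) := by exact_mod_cast hi1
    linarith
  have hle : (1:ℝ) / (θ + i) ≤ 1 := by
    rw [div_le_one hpos]
    have : (1:ℝ) ≤ (i:ℝ) := by exact_mod_cast hi1
    linarith
  rw [factor_compl hU, hU.nonroot i j h2 hji,
    ENNReal.toReal_sub_of_le (ENNReal.ofReal_le_one.mpr hle) ENNReal.one_ne_top]
  rw [ENNReal.toReal_one, ENNReal.toReal_ofReal (by positivity)]

lemma factor_pair (hU : IsHoppeParents θ μ U) (i : ℕ) {a b : ℕ} (hab : a ≠ b) :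
    μ ((U i) ⁻¹' ({a}ᶜ ∩ {b}ᶜ)) = 1 - (μ {ω | U i ω = a} + μ {ω | U i ω = b}) := by
  have h : (U i) ⁻¹' ({a}ᶜ ∩ {b}ᶜ) = ({ω | U i ω = a} ∪ {ω | U i ω = b})ᶜ := by
    ext ω; simp [not_or]
  rw [h, prob_compl_eq_one_sub ((measurableSet_eq_set hU i a).union (measurableSet_eq_set hU i b)),
    measure_union ?_ (measurableSet_eq_set hU i b)]
  rw [Set.disjoint_left]
  intro ω hωa hωb
  simp only [Set.mem_setOf_eq] at hωa hωb
  exact hab (hωa ▸ hωb ▸ rfl)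

lemma prod_div_telescope (f : ℕ → ℝ) (a : ℕ) :
    ∀ b, a ≤ b → (∀ i, a ≤ i → i ≤ b → f i ≠ 0) →
    ∏ i ∈ Finset.Ico a b, (f i / f (i+1)) = f a / f b := by
  intro b
  induction b with
  | zero =>
    intro h hf
    interval_cases a
    rw [Finset.Ico_self, Finset.prod_empty]
    exact (div_self (hf 0 le_rfl le_rfl)).symm
  | succ b ih =>
    intro hab hf
    rcases Nat.eq_or_lt_of_le hab with h | h
    · subst h
      rw [Finset.Ico_self, Finset.prod_empty]
      exact (div_self (hf _ le_rfl le_rfl)).symm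
    · have hab' : a ≤ b := by omega
      rw [Finset.prod_Ico_succ_top hab', ih hab' (fun i h1 h2 => hf i h1 (by omega))]
      have hb : f b ≠ 0 := hf b hab' (by omega)
      have hb1 : f (b+1) ≠ 0 := hf (b+1) (by omega) (by omega)
      field_simp

end


section
variable {Ω : Type*} [MeasurableSpace Ω] {θ : ℝ} {μ : Measure Ω} [IsProbabilityMeasure μ]
  {U : ℕ → Ω → ℕ}

def teleF (θ : ℝ) : ℕ → ℝ := fun i => θ + i - 1

def teleG (θ : ℝ) : ℕ → ℝ := fun i => (θ + i - 1) * (θ + i - 2)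

lemma toReal_one_sub_ofReal {x : ℝ} (h0 : 0 ≤ x) (h1 : x ≤ 1) :
    (1 - ENNReal.ofReal x).toReal = 1 - x := by
  rw [ENNReal.toReal_sub_of_le (ENNReal.ofReal_le_one.mpr h1) ENNReal.one_ne_top,
    ENNReal.toReal_one, ENNReal.toReal_ofReal h0]

lemma meas_leafEvent_root (hθ : 0 < θ) (hU : IsHoppeParents θ μ U) {n : ℕ} (hn : 2 ≤ n) :
    μ (leafEvent U n 1) = 0 := by
  have hsub : leafEvent U n 1 ⊆ (U 0) ⁻¹' ({1}ᶜ) := by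
    intro ω hω
    have := hω 2 (by simp [Finset.mem_Icc]; omega)
    simpa using this
  refine measure_mono_null hsub ?_
  rw [factor_compl hU, hU.root 0]
  have h : θ / (θ + ((0:ℕ):ℝ)) = 1 := by simp [div_self hθ.ne']
  rw [h, ENNReal.ofReal_one, tsub_self]

lemma meas_leafEvent_mid (hθ : 0 < θ) (hU : IsHoppeParents θ μ U) {n j : ℕ}
    (h2 : 2 ≤ j) (hjn : j ≤ n) :
    (μ (leafEvent U n j)).toReal = (θ + j - 2) / (θ + n - 2) := by
  rw [meas_leafEvent hU,
    ← Finset.prod_range_mul_prod_Ico _ (show j - 1 ≤ n - 1 by omega)]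
  rw [Finset.prod_eq_one (fun i hi => factor_compl_big hU (by
      simp only [Finset.mem_range] at hi; omega)), one_mul, ENNReal.toReal_prod]
  have key : ∏ i ∈ Finset.Ico (j-1) (n-1), (μ ((U i) ⁻¹' ({j}ᶜ))).toReal
      = ∏ i ∈ Finset.Ico (j-1) (n-1), (teleF θ i / teleF θ (i+1)) := by
    refine Finset.prod_congr rfl (fun i hi => ?_)
    simp only [Finset.mem_Ico] at hi
    have hi1' : (1:ℝ) ≤ (i:ℝ) := by exact_mod_cast (show 1 ≤ i by omega)
    have hipos : (0:ℝ) < θ + i := by linarith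
    rw [factor_compl_mid hθ hU h2 (by omega)]
    have hFi : teleF θ i = θ + (i:ℝ) - 1 := rfl
    have hFi1 : teleF θ (i+1) = θ + (i:ℝ) := by simp only [teleF]; push_cast; ring
    rw [hFi, hFi1]
    field_simp [hipos.ne']
  rw [key, prod_div_telescope _ (j-1) (n-1) (by omega) (fun i h1 h2' => by
    have : (1:ℝ) ≤ (i:ℝ) := by exact_mod_cast (show 1 ≤ i by omega)
    simp only [teleF]
    intro hc
    nlinarith)]
  simp only [teleF]
  rw [Nat.cast_sub (show 1 ≤ j by omega), Nat.cast_sub (show 1 ≤ n by omega)]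
  push_cast
  ring_nf

lemma meas_leafEvent_pair_root (hθ : 0 < θ) (hU : IsHoppeParents θ μ U) {n : ℕ}
    (hn : 2 ≤ n) (a : ℕ) :
    μ (leafEvent U n 1 ∩ leafEvent U n a) = 0 :=
  measure_mono_null Set.inter_subset_left (meas_leafEvent_root hθ hU hn)

set_option maxHeartbeats 1000000 in
lemma meas_leafEvent_pair_mid (hθ : 0 < θ) (hU : IsHoppeParents θ μ U) {n a b : ℕ}
    (h2 : 2 ≤ b) (hba : b < a) (han : a ≤ n) :
    (μ (leafEvent U n b ∩ leafEvent U n a)).toReal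
      = (θ + b - 2) * (θ + a - 3) / ((θ + n - 3) * (θ + n - 2)) := by
  have ha3 : 3 ≤ a := by omega
  have hn3 : 3 ≤ n := by omega
  rw [meas_leafEvent_pair hU,
    ← Finset.prod_range_mul_prod_Ico _ (show a - 1 ≤ n - 1 by omega),
    ← Finset.prod_range_mul_prod_Ico _ (show b - 1 ≤ a - 1 by omega)]
  have hz1 : ∏ i ∈ Finset.range (b-1), μ ((U i) ⁻¹' ({b}ᶜ ∩ {a}ᶜ)) = 1 := by
    refine Finset.prod_eq_one (fun i hi => ?_)
    simp only [Finset.mem_range] at hi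
    rw [factor_pair hU i (by omega), meas_eq_out hU i b (Or.inr (by omega)),
      meas_eq_out hU i a (Or.inr (by omega)), add_zero, tsub_zero]
  rw [hz1, one_mul, ENNReal.toReal_mul, ENNReal.toReal_prod, ENNReal.toReal_prod]
  have key2 : ∏ i ∈ Finset.Ico (b-1) (a-1), (μ ((U i) ⁻¹' ({b}ᶜ ∩ {a}ᶜ))).toReal
      = ∏ i ∈ Finset.Ico (b-1) (a-1), (teleF θ i / teleF θ (i+1)) := by
    refine Finset.prod_congr rfl (fun i hi => ?_)
    simp only [Finset.mem_Ico] at hi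
    have hi1' : (1:ℝ) ≤ (i:ℝ) := by exact_mod_cast (show 1 ≤ i by omega)
    have hipos : (0:ℝ) < θ + i := by linarith
    rw [factor_pair hU i (by omega), meas_eq_out hU i a (Or.inr (by omega)), add_zero,
      hU.nonroot i b h2 (by omega),
      toReal_one_sub_ofReal (by positivity) (by rw [div_le_one hipos]; linarith)]
    have hFi : teleF θ i = θ + (i:ℝ) - 1 := rfl
    have hFi1 : teleF θ (i+1) = θ + (i:ℝ) := by simp only [teleF]; push_cast; ring
    rw [hFi, hFi1]
    field_simp [hipos.ne']
  have key3 : ∏ i ∈ Finset.Ico (a-1) (n-1), (μ ((U i) ⁻¹' ({b}ᶜ ∩ {a}ᶜ))).toReal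
      = ∏ i ∈ Finset.Ico (a-1) (n-1), (teleG θ i / teleG θ (i+1)) := by
    refine Finset.prod_congr rfl (fun i hi => ?_)
    simp only [Finset.mem_Ico] at hi
    have hi2' : (2:ℝ) ≤ (i:ℝ) := by exact_mod_cast (show 2 ≤ i by omega)
    have hipos : (0:ℝ) < θ + i := by linarith
    have hne1 : θ + (i:ℝ) - 1 ≠ 0 := by intro hc; nlinarith
    rw [factor_pair hU i (by omega), hU.nonroot i b h2 (by omega),
      hU.nonroot i a (by omega) (by omega),
      ← ENNReal.ofReal_add (by positivity) (by positivity),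
      toReal_one_sub_ofReal (by positivity) (by
        rw [show 1/(θ+(i:ℝ)) + 1/(θ+(i:ℝ)) = 2/(θ+(i:ℝ)) by ring, div_le_one hipos]
        linarith)]
    have hGi : teleG θ i = (θ + (i:ℝ) - 1) * (θ + (i:ℝ) - 2) := rfl
    have hGi1 : teleG θ (i+1) = (θ + (i:ℝ)) * (θ + (i:ℝ) - 1) := by
      simp only [teleG]; push_cast; ring
    rw [hGi, hGi1]
    field_simp [hipos.ne', hne1]
    ring
  rw [key2, key3,
    prod_div_telescope _ (b-1) (a-1) (by omega) (fun i h1 h2' => by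
      have : (1:ℝ) ≤ (i:ℝ) := by exact_mod_cast (show 1 ≤ i by omega)
      simp only [teleF]
      intro hc
      nlinarith),
    prod_div_telescope _ (a-1) (n-1) (by omega) (fun i h1 h2' => by
      have : (2:ℝ) ≤ (i:ℝ) := by exact_mod_cast (show 2 ≤ i by omega)
      simp only [teleG]
      intro hc
      have hf : (0:ℝ) < θ + i - 1 := by linarith
      have hg : (0:ℝ) < θ + i - 2 := by linarith
      nlinarith)]
  have hfb : teleF θ (b-1) = θ + (b:ℝ) - 2 := by
    simp only [teleF]; rw [Nat.cast_sub (show 1 ≤ b by omega)]; push_cast; ring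
  have hfa : teleF θ (a-1) = θ + (a:ℝ) - 2 := by
    simp only [teleF]; rw [Nat.cast_sub (show 1 ≤ a by omega)]; push_cast; ring
  have hga : teleG θ (a-1) = (θ + (a:ℝ) - 2) * (θ + (a:ℝ) - 3) := by
    simp only [teleG]; rw [Nat.cast_sub (show 1 ≤ a by omega)]; push_cast; ring
  have hgn : teleG θ (n-1) = (θ + (n:ℝ) - 2) * (θ + (n:ℝ) - 3) := by
    simp only [teleG]; rw [Nat.cast_sub (show 1 ≤ n by omega)]; push_cast; ring
  rw [hfb, hfa, hga, hgn]
  have ha' : (3:ℝ) ≤ (a:ℝ) := by exact_mod_cast ha3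
  have hn' : (3:ℝ) ≤ (n:ℝ) := by exact_mod_cast hn3
  have e1 : θ + (a:ℝ) - 2 ≠ 0 := by intro hc; nlinarith
  have e2 : θ + (n:ℝ) - 2 ≠ 0 := by intro hc; nlinarith
  have e3 : θ + (n:ℝ) - 3 ≠ 0 := by intro hc; nlinarith
  field_simp

end

section
variable {Ω : Type*} [MeasurableSpace Ω] {θ : ℝ} {μ : Measure Ω} [IsProbabilityMeasure μ]
  {U : ℕ → Ω → ℕ}

omit [MeasurableSpace Ω] in
lemma leafCount_eq_sum (U : ℕ → Ω → ℕ) (n : ℕ) (ω : Ω) :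
    (hoppeLeafCount U ω n : ℝ)
      = ∑ j ∈ Finset.Icc 1 n, (leafEvent U n j).indicator (fun _ => (1:ℝ)) ω := by
  rw [hoppeLeafCount, Finset.card_filter]
  push_cast
  refine Finset.sum_congr rfl (fun j hj => ?_)
  by_cases h : ω ∈ leafEvent U n j
  · have h' : ∀ k ∈ Finset.Icc 2 n, U (k - 2) ω ≠ j := h
    rw [if_pos h', Set.indicator_of_mem h]
  · have h' : ¬ ∀ k ∈ Finset.Icc 2 n, U (k - 2) ω ≠ j := h
    rw [if_neg h', Set.indicator_of_notMem h]

lemma integral_ind {s : Set Ω} (hs : MeasurableSet s) :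
    ∫ ω, s.indicator (fun _ => (1:ℝ)) ω ∂μ = (μ s).toReal := by
  rw [integral_indicator_const (1:ℝ) hs, smul_eq_mul, mul_one, Measure.real]

lemma double_sum_symm (f : ℕ → ℕ → ℝ) (hsym : ∀ a b, f a b = f b a) (m : ℕ) :
    ∑ a ∈ Finset.Icc 1 m, ∑ b ∈ Finset.Icc 1 m, f a b
      = ∑ a ∈ Finset.Icc 1 m, f a a
        + 2 * ∑ a ∈ Finset.Icc 1 m, ∑ b ∈ Finset.Icc 1 (a-1), f b a := by
  induction m with
  | zero => simp
  | succ m ih =>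
    have key : ∀ g : ℕ → ℝ, ∑ x ∈ Finset.Icc 1 (m+1), g x
        = ∑ x ∈ Finset.Icc 1 m, g x + g (m+1) :=
      fun g => Finset.sum_Icc_succ_top (by omega) g
    simp only [key, Finset.sum_add_distrib, Nat.add_sub_cancel]
    have hswap : ∑ a ∈ Finset.Icc 1 m, f a (m+1) = ∑ a ∈ Finset.Icc 1 m, f (m+1) a :=
      Finset.sum_congr rfl (fun a _ => hsym a (m+1))
    linarith [ih, hswap]

lemma variance_leafCount (hU : IsHoppeParents θ μ U) (n : ℕ) :
    variance (fun ω => (hoppeLeafCount U ω n : ℝ)) μ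
      = (∑ j ∈ Finset.Icc 1 n, (μ (leafEvent U n j)).toReal)
        + 2 * (∑ a ∈ Finset.Icc 1 n, ∑ b ∈ Finset.Icc 1 (a-1),
            (μ (leafEvent U n b ∩ leafEvent U n a)).toReal)
        - (∑ j ∈ Finset.Icc 1 n, (μ (leafEvent U n j)).toReal)^2 := by
  have hL : (fun ω => (hoppeLeafCount U ω n : ℝ))
      = fun ω => ∑ j ∈ Finset.Icc 1 n, (leafEvent U n j).indicator (fun _ => (1:ℝ)) ω :=
    funext (leafCount_eq_sum U n)
  rw [hL]
  have hmem : MemLp (fun ω => ∑ j ∈ Finset.Icc 1 n,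
      (leafEvent U n j).indicator (fun _ => (1:ℝ)) ω) 2 μ :=
    memLp_finset_sum (f := fun j => (leafEvent U n j).indicator (fun _ => (1:ℝ)))
      _ (fun j _ => memLp_indicator_const 2
      (measurableSet_leafEvent hU n j) 1 (Or.inr (measure_ne_top μ _)))
  rw [variance_eq_sub hmem]
  have hint : ∀ j, Integrable ((leafEvent U n j).indicator (fun _ => (1:ℝ))) μ :=
    fun j => (integrable_const (1:ℝ)).indicator (measurableSet_leafEvent hU n j)
  have hEL : (μ[fun ω => ∑ j ∈ Finset.Icc 1 n,
        (leafEvent U n j).indicator (fun _ => (1:ℝ)) ω])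
      = ∑ j ∈ Finset.Icc 1 n, (μ (leafEvent U n j)).toReal := by
    rw [integral_finset_sum _ (fun j _ => hint j)]
    exact Finset.sum_congr rfl (fun j _ => integral_ind (measurableSet_leafEvent hU n j))
  have hsq : (fun ω => (∑ j ∈ Finset.Icc 1 n,
        (leafEvent U n j).indicator (fun _ => (1:ℝ)) ω)^2)
      = fun ω => ∑ a ∈ Finset.Icc 1 n, ∑ b ∈ Finset.Icc 1 n,
          (leafEvent U n a ∩ leafEvent U n b).indicator (fun _ => (1:ℝ)) ω := by
    funext ω
    rw [sq, Finset.sum_mul_sum]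
    refine Finset.sum_congr rfl (fun a _ => Finset.sum_congr rfl (fun b _ => ?_))
    rw [← Set.inter_indicator_mul]
    simp
  have hEL2 : (μ[(fun ω => ∑ j ∈ Finset.Icc 1 n,
        (leafEvent U n j).indicator (fun _ => (1:ℝ)) ω)^2])
      = ∑ a ∈ Finset.Icc 1 n, ∑ b ∈ Finset.Icc 1 n,
          (μ (leafEvent U n a ∩ leafEvent U n b)).toReal := by
    have : (fun ω => ∑ j ∈ Finset.Icc 1 n,
        (leafEvent U n j).indicator (fun _ => (1:ℝ)) ω)^2
        = fun ω => ∑ a ∈ Finset.Icc 1 n, ∑ b ∈ Finset.Icc 1 n,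
          (leafEvent U n a ∩ leafEvent U n b).indicator (fun _ => (1:ℝ)) ω := by
      rw [← hsq]; rfl
    rw [this, integral_finset_sum _ (fun a _ => integrable_finset_sum _ (fun b _ =>
      (integrable_const (1:ℝ)).indicator
        ((measurableSet_leafEvent hU n a).inter (measurableSet_leafEvent hU n b))))]
    refine Finset.sum_congr rfl (fun a _ => ?_)
    rw [integral_finset_sum _ (fun b _ => (integrable_const (1:ℝ)).indicator
        ((measurableSet_leafEvent hU n a).inter (measurableSet_leafEvent hU n b)))]
    exact Finset.sum_congr rfl (fun b _ => integral_ind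
      ((measurableSet_leafEvent hU n a).inter (measurableSet_leafEvent hU n b)))
  rw [hEL2, hEL]
  have hdiag : ∀ a, (μ (leafEvent U n a ∩ leafEvent U n a)).toReal
      = (μ (leafEvent U n a)).toReal := by intro a; rw [Set.inter_self]
  have hds := double_sum_symm (fun a b => (μ (leafEvent U n a ∩ leafEvent U n b)).toReal)
    (fun a b => by beta_reduce; rw [Set.inter_comm]) n
  rw [hds]
  simp only [hdiag]

end


section
variable {Ω : Type*} [MeasurableSpace Ω] {θ : ℝ} {μ : Measure Ω} [IsProbabilityMeasure μ]
  {U : ℕ → Ω → ℕ}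

lemma sum_range_theta (θ : ℝ) : ∀ m : ℕ, ∑ i ∈ Finset.range m, (θ + (i:ℝ))
    = m*θ + m*((m:ℝ)-1)/2
  | 0 => by simp
  | (m+1) => by
      rw [Finset.sum_range_succ, sum_range_theta θ m]
      push_cast
      ring

lemma sum_range_cubic (θ : ℝ) : ∀ m : ℕ, ∑ i ∈ Finset.range m,
      ((θ + (i:ℝ)) * (((i:ℝ)+1)*θ + ((i:ℝ)+1)*(i:ℝ)/2))
    = (m:ℝ)^4/8 + (m:ℝ)^3*θ/2 - (m:ℝ)^3/12 + (m:ℝ)^2*θ^2/2 - (m:ℝ)^2/8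
      + (m:ℝ)*θ^2/2 - (m:ℝ)*θ/2 + (m:ℝ)/12
  | 0 => by simp
  | (m+1) => by
      rw [Finset.sum_range_succ, sum_range_cubic θ m]
      push_cast
      ring

lemma icc_eq_ioc (a b : ℕ) : Finset.Icc (a+1) b = Finset.Ioc a b := by
  ext x
  simp only [Finset.mem_Icc, Finset.mem_Ioc]
  omega

lemma sum_meas (hθ : 0 < θ) (hU : IsHoppeParents θ μ U) {n : ℕ} (hn : 2 ≤ n) :
    ∑ j ∈ Finset.Icc 1 n, (μ (leafEvent U n j)).toReal
      = (((n:ℝ)-1)*θ + ((n:ℝ)-1)*((n:ℝ)-2)/2) / (θ + n - 2) := by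
  rw [show Finset.Icc 1 n = Finset.Ioc 0 n from icc_eq_ioc 0 n,
    ← Finset.sum_Ioc_consecutive _ (show 0 ≤ 1 by omega) (show 1 ≤ n by omega),
    show Finset.Ioc 0 1 = {1} from by ext x; simp only [Finset.mem_Ioc, Finset.mem_insert, Finset.mem_singleton]; omega,
    Finset.sum_singleton, meas_leafEvent_root hθ hU hn, ENNReal.toReal_zero, zero_add,
    ← icc_eq_ioc 1 n]
  rw [Finset.sum_congr rfl (fun j hj => meas_leafEvent_mid hθ hU
    (Finset.mem_Icc.mp hj).1 (Finset.mem_Icc.mp hj).2)]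
  rw [show Finset.Icc 2 n = Finset.Ico 2 (n+1) from (Finset.Ico_add_one_right_eq_Icc 2 n).symm,
    Finset.sum_Ico_eq_sum_range, show n+1-2 = n-1 from by omega, ← Finset.sum_div]
  rw [Finset.sum_congr rfl (fun i _ => show θ + ((2+i:ℕ):ℝ) - 2 = θ + (i:ℝ) from by
    push_cast; ring)]
  rw [sum_range_theta θ (n-1), Nat.cast_sub (show 1 ≤ n by omega)]
  push_cast
  ring

lemma sum_pair (hθ : 0 < θ) (hU : IsHoppeParents θ μ U) {n : ℕ} (hn : 3 ≤ n) :
    ∑ a ∈ Finset.Icc 1 n, ∑ b ∈ Finset.Icc 1 (a-1),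
        (μ (leafEvent U n b ∩ leafEvent U n a)).toReal
      = (((n:ℝ)-2)^4/8 + ((n:ℝ)-2)^3*θ/2 - ((n:ℝ)-2)^3/12 + ((n:ℝ)-2)^2*θ^2/2
          - ((n:ℝ)-2)^2/8 + ((n:ℝ)-2)*θ^2/2 - ((n:ℝ)-2)*θ/2 + ((n:ℝ)-2)/12)
        / ((θ + n - 3) * (θ + n - 2)) := by
  rw [show Finset.Icc 1 n = Finset.Ioc 0 n from icc_eq_ioc 0 n,
    ← Finset.sum_Ioc_consecutive _ (show 0 ≤ 2 by omega) (show 2 ≤ n by omega),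
    show Finset.Ioc 0 2 = {1, 2} from by ext x; simp only [Finset.mem_Ioc, Finset.mem_insert, Finset.mem_singleton]; omega]
  rw [Finset.sum_insert (by decide), Finset.sum_singleton]
  rw [show Finset.Icc 1 (1-1) = ∅ from rfl, Finset.sum_empty,
    show Finset.Icc 1 (2-1) = {1} from rfl, Finset.sum_singleton,
    meas_leafEvent_pair_root hθ hU (by omega) 2, ENNReal.toReal_zero, zero_add, zero_add]
  have hinner : ∀ a ∈ Finset.Ioc 2 n,
      ∑ b ∈ Finset.Icc 1 (a-1), (μ (leafEvent U n b ∩ leafEvent U n a)).toReal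
        = ((θ + (a:ℝ) - 3) * ((((a-2:ℕ)):ℝ)*θ + (((a-2:ℕ)):ℝ)*((((a-2:ℕ)):ℝ)-1)/2))
          / ((θ + n - 3) * (θ + n - 2)) := by
    intro a ha
    simp only [Finset.mem_Ioc] at ha
    rw [show Finset.Icc 1 (a-1) = Finset.Ioc 0 (a-1) from icc_eq_ioc 0 (a-1),
      ← Finset.sum_Ioc_consecutive _ (show 0 ≤ 1 by omega) (show 1 ≤ a-1 by omega),
      show Finset.Ioc 0 1 = {1} from by ext x; simp only [Finset.mem_Ioc, Finset.mem_insert, Finset.mem_singleton]; omega,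
      Finset.sum_singleton, meas_leafEvent_pair_root hθ hU (by omega) a,
      ENNReal.toReal_zero, zero_add, ← icc_eq_ioc 1 (a-1)]
    rw [Finset.sum_congr rfl (fun b hb => meas_leafEvent_pair_mid hθ hU
      (Finset.mem_Icc.mp hb).1 (by have := (Finset.mem_Icc.mp hb).2; omega) ha.2)]
    have hx : ∑ b ∈ Finset.Icc 2 (a-1), (θ + (b:ℝ) - 2) * (θ + (a:ℝ) - 3)
          / ((θ + (n:ℝ) - 3) * (θ + (n:ℝ) - 2))
        = ∑ b ∈ Finset.Icc 2 (a-1), (θ + (b:ℝ) - 2) * ((θ + (a:ℝ) - 3)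
          / ((θ + (n:ℝ) - 3) * (θ + (n:ℝ) - 2))) :=
      Finset.sum_congr rfl (fun b _ => mul_div_assoc _ _ _)
    rw [hx, ← Finset.sum_mul]
    rw [show Finset.Icc 2 (a-1) = Finset.Ico 2 ((a-1)+1) from (Finset.Ico_add_one_right_eq_Icc _ _).symm,
      show (a-1)+1 = a from by omega, Finset.sum_Ico_eq_sum_range,
      Finset.sum_congr rfl (fun i _ => show θ + ((2+i:ℕ):ℝ) - 2 = θ + (i:ℝ) from by
        push_cast; ring),
      sum_range_theta θ (a-2)]
    rw [mul_div_assoc]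
    ring
  rw [Finset.sum_congr rfl hinner]
  rw [show Finset.Ioc 2 n = Finset.Ico 3 (n+1) from by
      ext x; simp only [Finset.mem_Ioc, Finset.mem_Ico]; omega,
    Finset.sum_Ico_eq_sum_range, show n+1-3 = n-2 from by omega]
  rw [Finset.sum_congr rfl (fun i _ => show
      ((θ + ((3+i:ℕ):ℝ) - 3) * ((((3+i-2:ℕ)):ℝ)*θ + (((3+i-2:ℕ)):ℝ)*((((3+i-2:ℕ)):ℝ)-1)/2))
        / ((θ + n - 3) * (θ + n - 2))
      = ((θ + (i:ℝ)) * (((i:ℝ)+1)*θ + ((i:ℝ)+1)*(i:ℝ)/2)) / ((θ + n - 3) * (θ + n - 2)) from by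
    rw [show 3+i-2 = i+1 from by omega]
    push_cast
    ring_nf)]
  rw [← Finset.sum_div, sum_range_cubic θ (n-2), Nat.cast_sub (show 2 ≤ n by omega)]
  push_cast
  ring

end


section
variable {Ω : Type*} [MeasurableSpace Ω] {θ : ℝ} {μ : Measure Ω} [IsProbabilityMeasure μ]
  {U : ℕ → Ω → ℕ}

lemma variance_small_one (hU : IsHoppeParents θ μ U) :
    variance (fun ω => (hoppeLeafCount U ω 1 : ℝ)) μ = 0 := by
  rw [variance_leafCount hU 1, show Finset.Icc 1 1 = {1} from Finset.Icc_self 1]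
  simp only [Finset.sum_singleton, show (1:ℕ)-1 = 0 from rfl,
    show Finset.Icc 1 0 = ∅ from rfl, Finset.sum_empty]
  rw [meas_leafEvent hU 1 1, show (1:ℕ)-1 = 0 from rfl, Finset.range_zero,
    Finset.prod_empty, ENNReal.toReal_one]
  ring

lemma variance_small_two (hθ : 0 < θ) (hU : IsHoppeParents θ μ U) :
    variance (fun ω => (hoppeLeafCount U ω 2 : ℝ)) μ = 0 := by
  rw [variance_leafCount hU 2,
    show Finset.Icc 1 2 = {1, 2} from by
      ext x; simp only [Finset.mem_Icc, Finset.mem_insert, Finset.mem_singleton]; omega]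
  rw [Finset.sum_insert (by decide), Finset.sum_singleton,
    Finset.sum_insert (by decide), Finset.sum_singleton]
  rw [meas_leafEvent_root hθ hU (le_refl 2), ENNReal.toReal_zero,
    meas_leafEvent_mid hθ hU (le_refl 2) (le_refl 2)]
  rw [show Finset.Icc 1 (1-1) = ∅ from rfl, Finset.sum_empty,
    show Finset.Icc 1 (2-1) = {1} from rfl, Finset.sum_singleton,
    meas_leafEvent_pair_root hθ hU (le_refl 2) 2, ENNReal.toReal_zero]
  have h : (θ + ((2:ℕ):ℝ) - 2) / (θ + ((2:ℕ):ℝ) - 2) = 1 := by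
    apply div_self
    push_cast
    intro hc
    nlinarith
  rw [h]
  ring

lemma variance_big (hθ : 0 < θ) (hU : IsHoppeParents θ μ U) {n : ℕ} (hn : 3 ≤ n) :
    variance (fun ω => (hoppeLeafCount U ω n : ℝ)) μ - (θ + (n:ℝ) - 1) / 12
      = ((n:ℝ)*(-4*θ^3+6*θ^2-2*θ) + (-θ^4+8*θ^3-11*θ^2+4*θ))
        / (12*(θ+(n:ℝ)-2)^2*(θ+(n:ℝ)-3)) := by
  rw [variance_leafCount hU n, sum_meas hθ hU (by omega), sum_pair hθ hU hn]
  have hx : (3:ℝ) ≤ (n:ℝ) := by exact_mod_cast hn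
  have d2 : θ + (n:ℝ) - 2 ≠ 0 := by intro hc; nlinarith
  have d3 : θ + (n:ℝ) - 3 ≠ 0 := by intro hc; nlinarith
  field_simp
  ring

lemma bound_big (hθ : 0 < θ) {x : ℝ} (hx : 3 ≤ x) :
    x * |((x*(-4*θ^3+6*θ^2-2*θ) + (-θ^4+8*θ^3-11*θ^2+4*θ))
        / (12*(θ+x-2)^2*(θ+x-3)))|
      ≤ (4*θ^3+6*θ^2+2*θ + (θ^4+8*θ^3+11*θ^2+4*θ)) / (12*(min θ 1 / 6)^3) := by
  set c := min θ 1 / 6 with hc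
  have hmin : 0 < min θ 1 := lt_min hθ one_pos
  have hc0 : 0 < c := by rw [hc]; linarith
  have hxpos : 0 < x := by linarith
  have hcx3 : c * x ≤ θ + x - 3 := by
    rcases le_or_gt 6 x with h6 | h6
    · have h1 : c ≤ 1/6 := by
        rw [hc]
        have := min_le_right θ 1
        linarith
      nlinarith
    · have h1 : c ≤ θ/6 := by
        rw [hc]
        have := min_le_left θ 1
        linarith
      nlinarith
  have hcx2 : c * x ≤ θ + x - 2 := by linarith
  have hD2 : 0 < θ + x - 2 := lt_of_lt_of_le (by positivity) hcx2
  have hD3 : 0 < θ + x - 3 := lt_of_lt_of_le (by positivity) hcx3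
  have hden : 0 < 12*(θ+x-2)^2*(θ+x-3) := by positivity
  have ha : |(-4*θ^3+6*θ^2-2*θ)| ≤ 4*θ^3+6*θ^2+2*θ :=
    abs_le.mpr ⟨by nlinarith, by nlinarith⟩
  have hb : |(-θ^4+8*θ^3-11*θ^2+4*θ)| ≤ θ^4+8*θ^3+11*θ^2+4*θ :=
    abs_le.mpr ⟨by nlinarith, by nlinarith⟩
  have hb0 : (0:ℝ) ≤ θ^4+8*θ^3+11*θ^2+4*θ := by positivity
  have hNum : |x*(-4*θ^3+6*θ^2-2*θ) + (-θ^4+8*θ^3-11*θ^2+4*θ)|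
      ≤ (4*θ^3+6*θ^2+2*θ + (θ^4+8*θ^3+11*θ^2+4*θ)) * x := by
    calc |x*(-4*θ^3+6*θ^2-2*θ) + (-θ^4+8*θ^3-11*θ^2+4*θ)|
        ≤ |x*(-4*θ^3+6*θ^2-2*θ)| + |(-θ^4+8*θ^3-11*θ^2+4*θ)| := abs_add_le _ _
      _ = x * |(-4*θ^3+6*θ^2-2*θ)| + |(-θ^4+8*θ^3-11*θ^2+4*θ)| := by
          rw [abs_mul, abs_of_pos hxpos]
      _ ≤ x * (4*θ^3+6*θ^2+2*θ) + (θ^4+8*θ^3+11*θ^2+4*θ) :=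
          add_le_add (mul_le_mul_of_nonneg_left ha hxpos.le) hb
      _ ≤ (4*θ^3+6*θ^2+2*θ + (θ^4+8*θ^3+11*θ^2+4*θ)) * x := by nlinarith
  set K := 4*θ^3+6*θ^2+2*θ + (θ^4+8*θ^3+11*θ^2+4*θ) with hK
  have hK0 : 0 < K := by rw [hK]; positivity
  rw [abs_div, abs_of_pos hden, ← mul_div_assoc,
    div_le_div_iff₀ hden (by positivity : (0:ℝ) < 12*c^3)]
  have p1 : (c*x)^2 ≤ (θ+x-2)^2 := by nlinarith [mul_pos hc0 hxpos]
  have p2 : c ≤ θ+x-3 := le_trans (by nlinarith) hcx3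
  have p3 : c^3*x^2 ≤ (θ+x-2)^2*(θ+x-3) := by
    have h := mul_le_mul p1 p2 hc0.le (by positivity)
    nlinarith [h]
  have hA : x * |x*(-4*θ^3+6*θ^2-2*θ) + (-θ^4+8*θ^3-11*θ^2+4*θ)| ≤ x * (K * x) :=
    mul_le_mul_of_nonneg_left hNum hxpos.le
  nlinarith [mul_le_mul_of_nonneg_right hA (by positivity : (0:ℝ) ≤ 12*c^3),
    mul_le_mul_of_nonneg_left p3 (by positivity : (0:ℝ) ≤ 12*K)]

end



/-- Variance of the number of leaves of a Hoppe tree: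
`Var(L_n) = (θ + n - 1)/12 + O(1/n)`. -/
theorem hoppe_leaves_variance
    {Ω : Type*} [MeasurableSpace Ω]
    (θ : ℝ) (hθ : 0 < θ)
    (μ : Measure Ω) [IsProbabilityMeasure μ] (U : ℕ → Ω → ℕ) (hU : IsHoppeParents θ μ U) :
    ∃ C : ℝ, ∀ n : ℕ, 1 ≤ n →
      (n : ℝ) * |variance (fun ω => (hoppeLeafCount U ω n : ℝ)) μ
          - (θ + (n : ℝ) - 1) / 12| ≤ C := by
  refine ⟨θ/12 + (θ+1)/6
    + (4*θ^3+6*θ^2+2*θ + (θ^4+8*θ^3+11*θ^2+4*θ)) / (12*(min θ 1 / 6)^3), ?_⟩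
  have hmin : 0 < min θ 1 := lt_min hθ one_pos
  have hC3 : 0 ≤ (4*θ^3+6*θ^2+2*θ + (θ^4+8*θ^3+11*θ^2+4*θ)) / (12*(min θ 1 / 6)^3) := by
    positivity
  intro n hn
  rcases lt_or_ge n 3 with h3 | h3
  · interval_cases n
    · rw [variance_small_one hU, zero_sub, abs_neg,
        abs_of_nonneg (by push_cast; linarith : (0:ℝ) ≤ (θ+((1:ℕ):ℝ)-1)/12)]
      push_cast
      linarith
    · rw [variance_small_two hθ hU, zero_sub, abs_neg,
        abs_of_nonneg (by push_cast; linarith : (0:ℝ) ≤ (θ+((2:ℕ):ℝ)-1)/12)]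
      push_cast
      linarith
  · rw [variance_big hθ hU h3]
    have hx : (3:ℝ) ≤ (n:ℝ) := by exact_mod_cast h3
    have hb := bound_big hθ hx
    linarith


end
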